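/- Let k ≥ 4 and let 𝔸 be a finite multiset of positive integers with distinct values a_1 < ... < a_k and multiplicities r_1, ..., r_k ≥ 1. If |S(𝔸)| = Σ_{i=1}^{k} i·r_i, then a_i = i·d for all i and some positive integer d. -/

import Mathlib

open Pointwise

/-- Set of all nonempty subset sums of a finite set of integers. -/
def SetSub (A : Finset ℤ) : Finset ℤ :=
  (A.powerset.filter (fun B => B.Nonempty)).image fun B => B.sum id

/-- Set of all subset sums over subsets of cardinality at least `α`. -/
def SetSubAlpha (α : ℕ) (A : Finset ℤ) : Finset ℤ :=
  (A.powerset.filter (fun B => α ≤ B.card)).image fun B => B.sum id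

/-- Set of all nonempty subsequence (sub-multiset) sums of a multiset of integers. -/
def SeqSub (A : Multiset ℤ) : Finset ℤ :=
  ((A.powerset.filter (fun B => B ≠ 0)).map Multiset.sum).toFinset

/-- Set of all sub-multiset sums with at least `α` terms. -/
def SeqSubAlpha (α : ℕ) (A : Multiset ℤ) : Finset ℤ :=
  ((A.powerset.filter (fun B => α ≤ Multiset.card B)).map Multiset.sum).toFinset

/-- `h`-fold sumset of a finite set of integers. -/
def hfold : ℕ → Finset ℤ → Finset ℤ
  | 0, _ => {0}
  | n + 1, X => X + hfold n X

/-- Restricted 2-fold sumset: sums of two distinct elements. -/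
def Res2 (A : Finset ℤ) : Finset ℤ :=
  ((A ×ˢ A).filter (fun p => p.1 ≠ p.2)).image fun p => p.1 + p.2

/-- The golden ratio. -/
noncomputable def theta : ℝ := (1 + Real.sqrt 5) / 2
namespace SSI

def Am (a : ℕ → ℤ) (r : ℕ → ℕ) (m : ℕ) : Multiset ℤ :=
  ∑ i ∈ Finset.Icc 1 m, Multiset.replicate (r i) (a i)

def Lm (a : ℕ → ℤ) (r : ℕ → ℕ) (m : ℕ) : ℤ :=
  ∑ i ∈ Finset.Icc 1 m, (r i : ℤ) * a i

def Sm (a : ℕ → ℤ) (r : ℕ → ℕ) (m : ℕ) : Finset ℤ := SeqSub (Am a r m)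

def a' (a : ℕ → ℤ) (j : ℕ) : ℤ := if j = 0 then 0 else a j

/-- Hypothesis bundle. -/
structure Hyp (k : ℕ) (a : ℕ → ℤ) (r : ℕ → ℕ) : Prop where
  mono : ∀ i j, 1 ≤ i → i < j → j ≤ k → a i < a j
  pos : ∀ i, 1 ≤ i → i ≤ k → 0 < a i
  rp : ∀ i, 1 ≤ i → i ≤ k → 1 ≤ r i

variable {k : ℕ} {a : ℕ → ℤ} {r : ℕ → ℕ}

lemma mem_seqSub {A : Multiset ℤ} {x : ℤ} :
    x ∈ SeqSub A ↔ ∃ B, B ≤ A ∧ B ≠ 0 ∧ B.sum = x := by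
  simp only [SeqSub, Multiset.mem_toFinset, Multiset.mem_map, Multiset.mem_filter,
    Multiset.mem_powerset]
  constructor
  · rintro ⟨B, ⟨h1, h2⟩, h3⟩; exact ⟨B, h1, h2, h3⟩
  · rintro ⟨B, h1, h2, h3⟩; exact ⟨B, ⟨h1, h2⟩, h3⟩

lemma mem_Am {m : ℕ} {b : ℤ} (hb : b ∈ Am a r m) :
    ∃ i, 1 ≤ i ∧ i ≤ m ∧ b = a i := by
  rw [Am, Multiset.mem_sum] at hb
  obtain ⟨i, hi, hbi⟩ := hb
  rw [Finset.mem_Icc] at hi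
  exact ⟨i, hi.1, hi.2, Multiset.eq_of_mem_replicate hbi⟩

lemma sum_Am (a : ℕ → ℤ) (r : ℕ → ℕ) (m : ℕ) : (Am a r m).sum = Lm a r m := by
  rw [Am, Multiset.sum_sum]
  simp [Lm, Multiset.sum_replicate]

lemma Am_succ (a : ℕ → ℤ) (r : ℕ → ℕ) (m : ℕ) :
    Am a r (m+1) = Am a r m + Multiset.replicate (r (m+1)) (a (m+1)) :=
  Finset.sum_Icc_succ_top (Nat.one_le_iff_ne_zero.mpr (Nat.succ_ne_zero m)) _

lemma Lm_succ (a : ℕ → ℤ) (r : ℕ → ℕ) (m : ℕ) :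
    Lm a r (m+1) = Lm a r m + (r (m+1) : ℤ) * a (m+1) :=
  Finset.sum_Icc_succ_top (Nat.one_le_iff_ne_zero.mpr (Nat.succ_ne_zero m)) _

lemma sub_sum {A B : Multiset ℤ} (h : B ≤ A) : (A - B).sum = A.sum - B.sum := by
  have h1 := tsub_add_cancel_of_le h
  have h2 : (A - B).sum + B.sum = A.sum := by rw [← Multiset.sum_add, h1]
  omega

lemma a1_le (H : Hyp k a r) {i : ℕ} (h1 : 1 ≤ i) (h2 : i ≤ k) : a 1 ≤ a i := by
  rcases eq_or_lt_of_le h1 with h | h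
  · rw [← h]
  · exact le_of_lt (H.mono 1 i le_rfl h h2)

lemma pos_of_mem (H : Hyp k a r) {m : ℕ} {b : ℤ} (hm : m ≤ k) (hb : b ∈ Am a r m) : 0 < b := by
  obtain ⟨i, hi1, hi2, rfl⟩ := mem_Am hb
  exact H.pos i hi1 (hi2.trans hm)

lemma a1_le_mem (H : Hyp k a r) {m : ℕ} {b : ℤ} (hm : m ≤ k) (hb : b ∈ Am a r m) : a 1 ≤ b := by
  obtain ⟨i, hi1, hi2, rfl⟩ := mem_Am hb
  exact a1_le H hi1 (hi2.trans hm)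

lemma sum_nonneg_of_le (H : Hyp k a r) {m : ℕ} {B : Multiset ℤ} (hm : m ≤ k)
    (hB : B ≤ Am a r m) : 0 ≤ B.sum :=
  Multiset.sum_nonneg fun _ hx => le_of_lt (pos_of_mem H hm (Multiset.mem_of_le hB hx))

lemma sum_le_of_le (H : Hyp k a r) {m : ℕ} {B : Multiset ℤ} (hm : m ≤ k)
    (hB : B ≤ Am a r m) : B.sum ≤ Lm a r m := by
  have h1 : (Am a r m - B).sum = Lm a r m - B.sum := by rw [sub_sum hB, sum_Am]
  have h2 : 0 ≤ (Am a r m - B).sum := sum_nonneg_of_le H hm (Multiset.sub_le_self _ _)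
  omega

lemma a1_le_sum (H : Hyp k a r) {m : ℕ} {B : Multiset ℤ} (hm : m ≤ k)
    (hB : B ≤ Am a r m) (hne : B ≠ 0) : a 1 ≤ B.sum := by
  obtain ⟨b, hb⟩ := Multiset.exists_mem_of_ne_zero hne
  have hbB : B = b ::ₘ B.erase b := (Multiset.cons_erase hb).symm
  have h1 : a 1 ≤ b := a1_le_mem H hm (Multiset.mem_of_le hB hb)
  have h2 : 0 ≤ (B.erase b).sum :=
    sum_nonneg_of_le H hm (le_trans (Multiset.erase_le _ _) hB)
  rw [hbB, Multiset.sum_cons]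
  omega

lemma mem_Sm_bounds (H : Hyp k a r) {m : ℕ} {x : ℤ} (hm : m ≤ k) (hx : x ∈ Sm a r m) :
    a 1 ≤ x ∧ x ≤ Lm a r m := by
  obtain ⟨B, hB, hne, rfl⟩ := mem_seqSub.mp hx
  exact ⟨a1_le_sum H hm hB hne, sum_le_of_le H hm hB⟩

/-- Reflection: if `x ∈ Sm` and `x ≠ Lm`, then `Lm - x ∈ Sm`. -/
lemma reflect (H : Hyp k a r) {m : ℕ} {x : ℤ} (hm : m ≤ k) (hx : x ∈ Sm a r m)
    (hxL : x ≠ Lm a r m) : Lm a r m - x ∈ Sm a r m := by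
  obtain ⟨B, hB, hne, rfl⟩ := mem_seqSub.mp hx
  refine mem_seqSub.mpr ⟨Am a r m - B, Multiset.sub_le_self _ _, ?_, by
    rw [sub_sum hB, sum_Am]⟩
  intro h0
  apply hxL
  have := sub_sum hB
  rw [h0, Multiset.sum_zero, sum_Am] at this
  omega

/-- There are no elements of `Sm` in `(Lm - a 1, Lm)`. -/
lemma no_top_gap (H : Hyp k a r) {m : ℕ} {x : ℤ} (hm : m ≤ k) (hx : x ∈ Sm a r m)
    (h1 : Lm a r m - a 1 < x) (h2 : x < Lm a r m) : False := by
  have hy := reflect H hm hx (ne_of_lt h2)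
  have := (mem_Sm_bounds H hm hy).1
  omega

lemma a_inj (H : Hyp k a r) {i j : ℕ} (hi : 1 ≤ i) (hik : i ≤ k) (hj : 1 ≤ j) (hjk : j ≤ k)
    (h : a i = a j) : i = j := by
  rcases lt_trichotomy i j with hl | he | hl
  · exact absurd h (ne_of_lt (H.mono i j hi hl hjk))
  · exact he
  · exact absurd h.symm (ne_of_lt (H.mono j i hj hl hik))

lemma count_Am (H : Hyp k a r) {m i : ℕ} (hm : m ≤ k) (hi : 1 ≤ i) (him : i ≤ m) :
    (Am a r m).count (a i) = r i := by
  rw [Am, Multiset.count_sum']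
  rw [Finset.sum_eq_single i]
  · rw [Multiset.count_replicate, if_pos rfl]
  · intro j hj hne
    rw [Finset.mem_Icc] at hj
    rw [Multiset.count_replicate, if_neg]
    intro h
    exact hne (a_inj H hj.1 (hj.2.trans hm) hi (him.trans hm) h)
  · intro h
    exact absurd (Finset.mem_Icc.mpr ⟨hi, him⟩) h

/-- The two-element multiset `{a i, a j}` is a sub-multiset of `Am`, provided `i ≠ j`
or `2 ≤ r i`. -/
lemma pair_le (H : Hyp k a r) {m i j : ℕ} (hm : m ≤ k) (hi : 1 ≤ i) (him : i ≤ m)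
    (hj : 1 ≤ j) (hjm : j ≤ m) (hij : i ≠ j ∨ 2 ≤ r i ∧ i = j) :
    (a i ::ₘ {a j}) ≤ Am a r m := by
  rw [Multiset.le_iff_count]
  intro x
  rw [Multiset.count_cons, Multiset.count_singleton]
  by_cases h1 : x = a i
  · by_cases h2 : x = a j
    · -- x = a i = a j, so i = j, need 2 ≤ count
      have hij' : i = j := a_inj H hi (him.trans hm) hj (hjm.trans hm) (h1 ▸ h2.symm ▸ rfl)
      rcases hij with h | h
      · exact absurd hij' h
      · rw [if_pos h2, if_pos h1, h1, count_Am H hm hi him]; omega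
    · rw [if_neg h2, if_pos h1, h1, count_Am H hm hi him]
      have := H.rp i hi (him.trans hm); omega
  · by_cases h2 : x = a j
    · rw [if_pos h2, if_neg h1, h2, count_Am H hm hj hjm]
      have := H.rp j hj (hjm.trans hm); omega
    · rw [if_neg h2, if_neg h1]
      simp
lemma single_le (H : Hyp k a r) {m i : ℕ} (hm : m ≤ k) (hi : 1 ≤ i) (him : i ≤ m) :
    ({a i} : Multiset ℤ) ≤ Am a r m := by
  rw [Multiset.le_iff_count]
  intro x
  rw [Multiset.count_singleton]
  by_cases h1 : x = a i
  · rw [if_pos h1, h1, count_Am H hm hi him]; exact H.rp i hi (him.trans hm)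
  · rw [if_neg h1]; simp
def NEW (a : ℕ → ℤ) (r : ℕ → ℕ) (m : ℕ) : Finset ℤ :=
  ((Finset.Icc 1 (r (m+1))) ×ˢ (Finset.range (m+1))).image
    (fun p => Lm a r m + p.1 * a (m+1) - a' a p.2)
variable {k : ℕ} {a : ℕ → ℤ} {r : ℕ → ℕ}

lemma a'_nonneg (H : Hyp k a r) {j : ℕ} (hj : j ≤ k) : 0 ≤ a' a j := by
  unfold a'
  split
  · rfl
  · exact le_of_lt (H.pos j (by omega) hj)

lemma a'_lt (H : Hyp k a r) {j m : ℕ} (hj : j ≤ m) (hm : m + 1 ≤ k) : a' a j < a (m+1) := by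
  unfold a'
  split
  · exact H.pos (m+1) (by omega) hm
  · exact H.mono j (m+1) (by omega) (by omega) hm

lemma mem_NEW {m : ℕ} {x : ℤ} :
    x ∈ NEW a r m ↔ ∃ t j, 1 ≤ t ∧ t ≤ r (m+1) ∧ j ≤ m ∧
      x = Lm a r m + (t : ℤ) * a (m+1) - a' a j := by
  simp only [NEW, Finset.mem_image, Finset.mem_product, Finset.mem_Icc, Finset.mem_range]
  constructor
  · rintro ⟨⟨t, j⟩, ⟨⟨h1, h2⟩, h3⟩, rfl⟩
    exact ⟨t, j, h1, h2, by omega, rfl⟩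
  · rintro ⟨t, j, h1, h2, h3, rfl⟩
    exact ⟨⟨t, j⟩, ⟨⟨h1, h2⟩, by omega⟩, rfl⟩

lemma NEW_gt (H : Hyp k a r) {m : ℕ} {x : ℤ} (hm : m + 1 ≤ k) (hx : x ∈ NEW a r m) :
    Lm a r m < x := by
  obtain ⟨t, j, h1, h2, h3, rfl⟩ := mem_NEW.mp hx
  have h4 : a' a j < a (m+1) := a'_lt H h3 hm
  have h5 : 0 < a (m+1) := H.pos (m+1) (by omega) hm
  have h6 : (1 : ℤ) ≤ (t : ℤ) := by exact_mod_cast h1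
  nlinarith

lemma card_NEW (H : Hyp k a r) {m : ℕ} (hm : m + 1 ≤ k) :
    (NEW a r m).card = (m + 1) * r (m+1) := by
  rw [NEW, Finset.card_image_of_injOn, Finset.card_product, Nat.card_Icc,
    Finset.card_range]
  · rw [Nat.add_sub_cancel]
    ring
  · rintro ⟨t, j⟩ h1 ⟨t', j'⟩ h2 heq
    dsimp only at heq
    simp only [Finset.coe_product, Set.mem_prod, Finset.mem_coe, Finset.mem_Icc, Finset.mem_range] at h1 h2

    have hA : 0 < a (m+1) := H.pos (m+1) (by omega) hm
    have hj : a' a j < a (m+1) := a'_lt H (by omega) hm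
    have hj' : a' a j' < a (m+1) := a'_lt H (by omega) hm
    have hjn : 0 ≤ a' a j := a'_nonneg H (by omega)
    have hjn' : 0 ≤ a' a j' := a'_nonneg H (by omega)
    have heq2 : ((t : ℤ) - t') * a (m+1) = a' a j - a' a j' := by linarith
    have htt : t = t' := by
      rcases lt_trichotomy t t' with h | h | h
      · have h6 : (t : ℤ) - t' ≤ -1 := by omega
        nlinarith
      · exact h
      · have h6 : (1 : ℤ) ≤ (t : ℤ) - t' := by omega
        nlinarith
    subst htt
    have haj : a' a j = a' a j' := by linarith
    have hjj : j = j' := by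
      unfold a' at haj
      by_cases e1 : j = 0 <;> by_cases e2 : j' = 0
      · omega
      · rw [if_pos e1, if_neg e2] at haj
        exact absurd haj.symm (ne_of_gt (H.pos j' (by omega) (by omega)))
      · rw [if_neg e1, if_pos e2] at haj
        exact absurd haj (ne_of_gt (H.pos j (by omega) (by omega)))
      · rw [if_neg e1, if_neg e2] at haj
        rcases lt_trichotomy j j' with h | h | h
        · exact absurd haj (ne_of_lt (H.mono j j' (by omega) h (by omega)))
        · exact h
        · exact absurd haj.symm (ne_of_lt (H.mono j' j (by omega) h (by omega)))
    rw [hjj]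

lemma ne_zero_of_repl {B : Multiset ℤ} {t : ℕ} {x : ℤ} (ht : 1 ≤ t)
    (h : ∃ C, B = C + Multiset.replicate t x) : B ≠ 0 := by
  obtain ⟨C, rfl⟩ := h
  intro h0
  have hx : x ∈ C + Multiset.replicate t x :=
    Multiset.mem_add.mpr (Or.inr (Multiset.mem_replicate.mpr ⟨by omega, rfl⟩))
  rw [h0] at hx
  exact Multiset.notMem_zero x hx

lemma NEW_subset (H : Hyp k a r) {m : ℕ} (h1 : 1 ≤ m) (hk : m + 1 ≤ k) :
    NEW a r m ⊆ Sm a r (m+1) := by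
  intro x hx
  obtain ⟨t, j, ht1, ht2, hj, rfl⟩ := mem_NEW.mp hx
  by_cases hj0 : j = 0
  · refine mem_seqSub.mpr ⟨Am a r m + Multiset.replicate t (a (m+1)), ?_, ?_, ?_⟩
    · rw [Am_succ]
      exact add_le_add_right ((Multiset.replicate_le_replicate _).mpr ht2) _
    · exact ne_zero_of_repl ht1 ⟨_, rfl⟩
    · rw [Multiset.sum_add, sum_Am, Multiset.sum_replicate, hj0]
      simp [a']
  · have hj1 : 1 ≤ j := Nat.one_le_iff_ne_zero.mpr hj0
    have hsle : ({a j} : Multiset ℤ) ≤ Am a r m := single_le H (by omega) hj1 hj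
    refine mem_seqSub.mpr ⟨(Am a r m - {a j}) + Multiset.replicate t (a (m+1)), ?_, ?_, ?_⟩
    · rw [Am_succ]
      exact add_le_add (Multiset.sub_le_self _ _) ((Multiset.replicate_le_replicate _).mpr ht2)
    · exact ne_zero_of_repl ht1 ⟨_, rfl⟩
    · rw [Multiset.sum_add, sub_sum hsle, sum_Am, Multiset.sum_replicate,
        Multiset.sum_singleton]
      simp only [a', if_neg hj0, smul_eq_mul]
      ring

lemma Sm_mono (a : ℕ → ℤ) (r : ℕ → ℕ) (m : ℕ) : Sm a r m ⊆ Sm a r (m+1) := by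
  intro x hx
  obtain ⟨B, hB, hne, rfl⟩ := mem_seqSub.mp hx
  exact mem_seqSub.mpr ⟨B, hB.trans (by rw [Am_succ]; exact Multiset.le_add_right _ _),
    hne, rfl⟩

lemma card_step (H : Hyp k a r) {m : ℕ} (h1 : 1 ≤ m) (hk : m + 1 ≤ k) :
    (Sm a r m).card + (m+1) * r (m+1) ≤ (Sm a r (m+1)).card := by
  have hdisj : Disjoint (Sm a r m) (NEW a r m) := by
    rw [Finset.disjoint_left]
    intro x hx hx2
    have := (mem_Sm_bounds H (by omega) hx).2
    have := NEW_gt H hk hx2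
    omega
  have hsub : Sm a r m ∪ NEW a r m ⊆ Sm a r (m+1) :=
    Finset.union_subset (Sm_mono a r m) (NEW_subset H h1 hk)
  calc (Sm a r m).card + (m+1) * r (m+1)
      = (Sm a r m ∪ NEW a r m).card := by
        rw [Finset.card_union_of_disjoint hdisj, card_NEW H hk]
    _ ≤ (Sm a r (m+1)).card := Finset.card_le_card hsub

lemma card_S1 (H : Hyp k a r) (hk : 1 ≤ k) : (Sm a r 1).card = r 1 := by
  have hAm1 : Am a r 1 = Multiset.replicate (r 1) (a 1) := by
    rw [Am, Finset.Icc_self, Finset.sum_singleton]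
  have : Sm a r 1 = (Finset.Icc 1 (r 1)).image (fun t : ℕ => (t : ℤ) * a 1) := by
    ext x
    rw [Sm, mem_seqSub, Finset.mem_image]
    constructor
    · rintro ⟨B, hB, hne, rfl⟩
      rw [hAm1] at hB
      have hBrep : B = Multiset.replicate (Multiset.card B) (a 1) :=
        Multiset.eq_replicate_card.mpr
          (fun b hb => Multiset.eq_of_mem_replicate (Multiset.mem_of_le hB hb))
      refine ⟨Multiset.card B, Finset.mem_Icc.mpr ⟨?_, ?_⟩, ?_⟩
      · rcases Nat.eq_zero_or_pos (Multiset.card B) with h | h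
        · exact absurd (Multiset.card_eq_zero.mp h) hne
        · exact h
      · calc Multiset.card B ≤ Multiset.card (Multiset.replicate (r 1) (a 1)) :=
              Multiset.card_le_card hB
          _ = r 1 := Multiset.card_replicate _ _
      · rw [hBrep, Multiset.sum_replicate]; simp
    · rintro ⟨t, ht, rfl⟩
      rw [Finset.mem_Icc] at ht
      refine ⟨Multiset.replicate t (a 1), ?_, ?_, ?_⟩
      · rw [hAm1]; exact (Multiset.replicate_le_replicate _).mpr ht.2
      · intro h0
        have := Multiset.card_replicate t (a 1)
        rw [h0] at this
        simp at this
        omega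
      · rw [Multiset.sum_replicate]; simp
  rw [this, Finset.card_image_of_injOn, Nat.card_Icc]
  · omega
  · intro x _ y _ hxy
    have hpos : (0:ℤ) < a 1 := H.pos 1 le_rfl hk
    have : (x:ℤ) = y := by
      dsimp only at hxy
      exact mul_right_cancel₀ (ne_of_gt hpos) hxy
    exact_mod_cast this

lemma Icc_split (f : ℕ → ℕ) {m n : ℕ} (h : m ≤ n) :
    ∑ i ∈ Finset.Icc 1 n, f i = (∑ i ∈ Finset.Icc 1 m, f i) + ∑ i ∈ Finset.Icc (m+1) n, f i := by
  rw [← Finset.sum_union]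
  · congr 1
    ext x
    simp only [Finset.mem_union, Finset.mem_Icc]
    omega
  · rw [Finset.disjoint_left]
    intro x hx hx2
    rw [Finset.mem_Icc] at hx hx2
    omega

lemma chain (H : Hyp k a r) {m₀ m : ℕ} (h0 : 1 ≤ m₀) (h1 : m₀ ≤ m) (h2 : m ≤ k) :
    (Sm a r m₀).card + ∑ i ∈ Finset.Icc (m₀+1) m, i * r i ≤ (Sm a r m).card := by
  induction m, h1 using Nat.le_induction with
  | base =>
    rw [Finset.Icc_eq_empty (by omega), Finset.sum_empty]
    omega
  | succ n hn ih =>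
    have hnk : n + 1 ≤ k := h2
    have ih' := ih (by omega)
    have hstep := card_step H (by omega) hnk
    rw [Finset.sum_Icc_succ_top (by omega : m₀ + 1 ≤ n + 1)]
    omega

lemma cardS_eq (H : Hyp k a r)
    (HC : (Sm a r k).card = ∑ i ∈ Finset.Icc 1 k, i * r i)
    {m : ℕ} (h1 : 1 ≤ m) (h2 : m ≤ k) :
    (Sm a r m).card = ∑ i ∈ Finset.Icc 1 m, i * r i := by
  have hlow : ∑ i ∈ Finset.Icc 1 m, i * r i ≤ (Sm a r m).card := by
    have := chain H le_rfl h1 h2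
    rw [card_S1 H (h1.trans h2)] at this
    calc ∑ i ∈ Finset.Icc 1 m, i * r i
        = (∑ i ∈ Finset.Icc 1 1, i * r i) + ∑ i ∈ Finset.Icc 2 m, i * r i := Icc_split _ h1
      _ = r 1 + ∑ i ∈ Finset.Icc 2 m, i * r i := by
          rw [Finset.Icc_self, Finset.sum_singleton, one_mul]
      _ ≤ (Sm a r m).card := this
  have hhigh : (Sm a r m).card ≤ ∑ i ∈ Finset.Icc 1 m, i * r i := by
    have := chain H h1 h2 le_rfl
    rw [HC, Icc_split (fun i => i * r i) h2] at this
    omega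
  omega

lemma struct (H : Hyp k a r)
    (HC : (Sm a r k).card = ∑ i ∈ Finset.Icc 1 k, i * r i)
    {m : ℕ} (h1 : 1 ≤ m) (hk : m + 1 ≤ k) :
    Sm a r (m+1) = Sm a r m ∪ NEW a r m := by
  have hdisj : Disjoint (Sm a r m) (NEW a r m) := by
    rw [Finset.disjoint_left]
    intro x hx hx2
    have := (mem_Sm_bounds H (by omega) hx).2
    have := NEW_gt H hk hx2
    omega
  have hsub : Sm a r m ∪ NEW a r m ⊆ Sm a r (m+1) :=
    Finset.union_subset (Sm_mono a r m) (NEW_subset H h1 hk)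
  refine (Finset.eq_of_subset_of_card_le hsub ?_).symm
  rw [Finset.card_union_of_disjoint hdisj, card_NEW H hk,
    cardS_eq H HC (by omega) hk, cardS_eq H HC h1 (by omega),
    Finset.sum_Icc_succ_top (by omega : 1 ≤ m + 1)]

lemma mem_struct (H : Hyp k a r)
    (HC : (Sm a r k).card = ∑ i ∈ Finset.Icc 1 k, i * r i)
    {m : ℕ} (h1 : 1 ≤ m) (hk : m + 1 ≤ k) {x : ℤ} (hx : x ∈ Sm a r (m+1)) :
    x ∈ Sm a r m ∨ ∃ t j, 1 ≤ t ∧ t ≤ r (m+1) ∧ j ≤ m ∧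
      x = Lm a r m + (t : ℤ) * a (m+1) - a' a j := by
  rw [struct H HC h1 hk, Finset.mem_union] at hx
  rcases hx with h | h
  · exact Or.inl h
  · exact Or.inr (mem_NEW.mp h)

/-- Window lemma: every element of `Sm m` smaller than `a (m+1)` is one of the `a j`. -/
lemma window (H : Hyp k a r)
    (HC : (Sm a r k).card = ∑ i ∈ Finset.Icc 1 k, i * r i)
    {m : ℕ} (h1 : 1 ≤ m) (hk : m + 1 ≤ k) {x : ℤ} (hx : x ∈ Sm a r m)
    (hxa : x < a (m+1)) : ∃ j, 1 ≤ j ∧ j ≤ m ∧ x = a j := by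
  obtain ⟨B, hB, hne, rfl⟩ := mem_seqSub.mp hx
  set y : ℤ := (Lm a r m - B.sum) + (r (m+1) : ℤ) * a (m+1) with hy
  have hyS : y ∈ Sm a r (m+1) := by
    refine mem_seqSub.mpr ⟨(Am a r m - B) + Multiset.replicate (r (m+1)) (a (m+1)),
      ?_, ?_, ?_⟩
    · rw [Am_succ]
      exact add_le_add (Multiset.sub_le_self _ _) le_rfl
    · exact ne_zero_of_repl (H.rp (m+1) (by omega) hk) ⟨_, rfl⟩
    · rw [Multiset.sum_add, sub_sum hB, sum_Am, Multiset.sum_replicate]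
      simp [hy]
  have hrm : 1 ≤ r (m+1) := H.rp (m+1) (by omega) hk
  have hapos : 0 < a (m+1) := H.pos (m+1) (by omega) hk
  have hra : a (m+1) ≤ (r (m+1) : ℤ) * a (m+1) := by
    nlinarith [(by exact_mod_cast hrm : (1:ℤ) ≤ (r (m+1) : ℤ)), hapos]
  have hygt : Lm a r m < y := by
    have hBle : B.sum < a (m+1) := hxa
    omega
  rcases mem_struct H HC h1 hk hyS with h | ⟨t, j, ht1, ht2, hj, heq⟩
  · exact absurd (mem_Sm_bounds H (by omega) h).2 (by omega)
  · have ht2' : (t : ℤ) ≤ (r (m+1) : ℤ) := by exact_mod_cast ht2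
    have hxeq : B.sum = ((r (m+1) : ℤ) - t) * a (m+1) + a' a j := by
      rw [hy] at heq
      have : (Lm a r m - B.sum) + (r (m+1) : ℤ) * a (m+1)
          = Lm a r m + (t : ℤ) * a (m+1) - a' a j := heq
      nlinarith [this]
    have hanonneg : 0 ≤ a' a j := a'_nonneg H (by omega)
    have htr : t = r (m+1) := by
      by_contra hne2
      have h6 : (1 : ℤ) ≤ (r (m+1) : ℤ) - t := by omega
      nlinarith
    rw [htr] at hxeq
    have hxa' : B.sum = a' a j := by rw [hxeq]; ring
    have hxpos : 0 < B.sum := lt_of_lt_of_le (H.pos 1 le_rfl (by omega))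
      (a1_le_sum H (by omega) hB hne)
    have hj0 : j ≠ 0 := by
      intro h0
      rw [h0] at hxa'
      simp [a'] at hxa'
      omega
    refine ⟨j, Nat.one_le_iff_ne_zero.mpr hj0, hj, ?_⟩
    rw [hxa']
    simp [a', hj0]

/-- There is no element of `Sm (m+1)` in the open interval `(Lm m - a 1, Lm m)`. -/
lemma gap_absurd (H : Hyp k a r)
    (HC : (Sm a r k).card = ∑ i ∈ Finset.Icc 1 k, i * r i)
    {m : ℕ} (h1 : 1 ≤ m) (hk : m + 1 ≤ k) {v : ℤ} (hv : v ∈ Sm a r (m+1))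
    (hlo : Lm a r m - a 1 < v) (hhi : v < Lm a r m) : False := by
  rcases mem_struct H HC h1 hk hv with h | ⟨t, j, ht1, ht2, hj, heq⟩
  · exact no_top_gap H (by omega) h hlo hhi
  · have := NEW_gt H hk (mem_NEW.mpr ⟨t, j, ht1, ht2, hj, heq⟩)
    omega

lemma a_le (H : Hyp k a r) {j m : ℕ} (hj : 1 ≤ j) (hjm : j ≤ m) (hm : m ≤ k) :
    a j ≤ a m := by
  rcases eq_or_lt_of_le hjm with h | h
  · rw [h]
  · exact le_of_lt (H.mono j m hj h hm)

/-- The sum `a i + a j` as an element of `Sm`. -/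
lemma pair_mem_Sm (H : Hyp k a r) {m i j : ℕ} (hm : m ≤ k) (hi : 1 ≤ i) (him : i ≤ m)
    (hj : 1 ≤ j) (hjm : j ≤ m) (hij : i ≠ j ∨ 2 ≤ r i ∧ i = j) :
    a i + a j ∈ Sm a r m := by
  refine mem_seqSub.mpr ⟨a i ::ₘ {a j}, pair_le H hm hi him hj hjm hij, by simp, by
    rw [Multiset.sum_cons, Multiset.sum_singleton]⟩

/-- Key step: `a (m+1) = a 1 + a m` whenever the pair `(i₀, j₀) = (1, m)` is available. -/
lemma stepAP (H : Hyp k a r)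
    (HC : (Sm a r k).card = ∑ i ∈ Finset.Icc 1 k, i * r i)
    {m : ℕ} (h2 : 2 ≤ m) (hk : m + 1 ≤ k) : a (m+1) = a 1 + a m := by
  have hp : 0 < a 1 := H.pos 1 le_rfl (by omega)
  have hmem : a 1 + a m ∈ Sm a r m :=
    pair_mem_Sm H (by omega) le_rfl (by omega) (by omega) le_rfl (Or.inl (by omega))
  have hle : a (m+1) ≤ a 1 + a m := by
    by_contra hlt
    push_neg at hlt
    obtain ⟨j, hj1, hjm, hjeq⟩ := window H HC (by omega) hk hmem hlt
    have := a_le H hj1 hjm (by omega)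
    omega
  have hge : a 1 + a m ≤ a (m+1) := by
    by_contra hlt
    push_neg at hlt
    have hpair : (a 1 ::ₘ {a m}) ≤ Am a r m :=
      pair_le H (by omega) le_rfl (by omega) (by omega) le_rfl (Or.inl (by omega))
    have hvmem : (Lm a r m - (a 1 + a m)) + a (m+1) ∈ Sm a r (m+1) := by
      refine mem_seqSub.mpr ⟨(Am a r m - (a 1 ::ₘ {a m})) + Multiset.replicate 1 (a (m+1)),
        ?_, ?_, ?_⟩
      · rw [Am_succ]
        exact add_le_add (Multiset.sub_le_self _ _)
          ((Multiset.replicate_le_replicate _).mpr (H.rp (m+1) (by omega) hk))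
      · exact ne_zero_of_repl le_rfl ⟨_, rfl⟩
      · rw [Multiset.sum_add, sub_sum hpair, sum_Am, Multiset.sum_replicate,
          Multiset.sum_cons, Multiset.sum_singleton]
        simp
    have ham : a m < a (m+1) := H.mono m (m+1) (by omega) (by omega) hk
    exact gap_absurd H HC (by omega) hk hvmem (by omega) (by omega)
  omega

lemma a2_r1big (H : Hyp k a r)
    (HC : (Sm a r k).card = ∑ i ∈ Finset.Icc 1 k, i * r i)
    (hr1 : 2 ≤ r 1) (hk : 2 ≤ k) : a 2 = 2 * a 1 := by
  have hp : 0 < a 1 := H.pos 1 le_rfl (by omega)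
  have hnorm : a (1+1) = a 2 := by norm_num
  have hnormr : r (1+1) = r 2 := by norm_num
  have hnormL : Lm a r (1+1) = Lm a r 2 := by norm_num
  have hmem : a 1 + a 1 ∈ Sm a r 1 :=
    pair_mem_Sm H (by omega) le_rfl le_rfl le_rfl le_rfl (Or.inr ⟨hr1, rfl⟩)
  have hle : a 2 ≤ 2 * a 1 := by
    by_contra hlt
    push_neg at hlt
    obtain ⟨j, hj1, hjm, hjeq⟩ := window H HC le_rfl hk hmem (by omega)
    interval_cases j
    omega
  have hge : 2 * a 1 ≤ a 2 := by
    by_contra hlt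
    push_neg at hlt
    have hpair : (a 1 ::ₘ {a 1}) ≤ Am a r 1 :=
      pair_le H (by omega) le_rfl le_rfl le_rfl le_rfl (Or.inr ⟨hr1, rfl⟩)
    have hvmem : (Lm a r 1 - (a 1 + a 1)) + a 2 ∈ Sm a r 2 := by
      refine mem_seqSub.mpr ⟨(Am a r 1 - (a 1 ::ₘ {a 1})) + Multiset.replicate 1 (a 2),
        ?_, ?_, ?_⟩
      · have hA2 : Am a r 2 = Am a r 1 + Multiset.replicate (r 2) (a 2) := Am_succ a r 1
        rw [hA2]
        exact add_le_add (Multiset.sub_le_self _ _)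
          ((Multiset.replicate_le_replicate _).mpr (H.rp 2 (by omega) hk))
      · exact ne_zero_of_repl le_rfl ⟨_, rfl⟩
      · rw [Multiset.sum_add, sub_sum hpair, sum_Am, Multiset.sum_replicate,
          Multiset.sum_cons, Multiset.sum_singleton]
        simp
    have ham : a 1 < a 2 := H.mono 1 2 le_rfl one_lt_two hk
    exact gap_absurd H HC le_rfl hk hvmem (by omega) (by omega)
  omega

lemma sum_rep (H : Hyp k a r) {m : ℕ} (hm : m ≤ k) {B : Multiset ℤ} (hB : B ≤ Am a r m) :
    ∃ c : ℕ → ℕ, (∀ i, 1 ≤ i → i ≤ m → c i ≤ r i) ∧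
      B.sum = ∑ i ∈ Finset.Icc 1 m, (c i : ℤ) * a i := by
  refine ⟨fun i => B.count (a i), fun i hi him => ?_, ?_⟩
  · rw [← count_Am H hm hi him]
    exact Multiset.count_le_of_le _ hB
  · have hsub : B.toFinset ⊆ (Finset.Icc 1 m).image a := by
      intro x hx
      rw [Multiset.mem_toFinset] at hx
      obtain ⟨i, hi1, hi2, rfl⟩ := mem_Am (Multiset.mem_of_le hB hx)
      exact Finset.mem_image.mpr ⟨i, Finset.mem_Icc.mpr ⟨hi1, hi2⟩, rfl⟩
    have h1 : B.sum = ∑ x ∈ B.toFinset, (B.count x : ℤ) * x := by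
      conv_lhs => rw [← Multiset.toFinset_sum_count_nsmul_eq B]
      rw [Multiset.sum_sum]
      refine Finset.sum_congr rfl fun x _ => ?_
      rw [Multiset.sum_nsmul, Multiset.sum_singleton]
      simp [mul_comm]
    rw [h1, Finset.sum_subset hsub (fun x _ hx => by
      rw [Multiset.count_eq_zero_of_notMem (fun hmem => hx (Multiset.mem_toFinset.mpr hmem))]
      simp)]
    rw [Finset.sum_image (fun x hx y hy hxy => by
      rw [Finset.mem_coe, Finset.mem_Icc] at hx hy
      exact a_inj H hx.1 (hx.2.trans hm) hy.1 (hy.2.trans hm) hxy)]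

lemma Lm_one (a : ℕ → ℤ) (r : ℕ → ℕ) : Lm a r 1 = (r 1 : ℤ) * a 1 := by
  rw [Lm, Finset.Icc_self, Finset.sum_singleton]

lemma a2_eq (H : Hyp k a r)
    (HC : (Sm a r k).card = ∑ i ∈ Finset.Icc 1 k, i * r i)
    (hk : 4 ≤ k) : a 2 = 2 * a 1 := by
  have hp : 0 < a 1 := H.pos 1 le_rfl (by omega)
  have hq : 0 < a 2 := H.pos 2 (by omega) (by omega)
  have hpq : a 1 < a 2 := H.mono 1 2 le_rfl one_lt_two (by omega)
  rcases Nat.lt_or_ge (r 1) 2 with hr1 | hr1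
  swap
  · exact a2_r1big H HC hr1 (by omega)
  have hr1' : r 1 = 1 := by have := H.rp 1 le_rfl (by omega); omega
  have h3 : a 3 = a 1 + a 2 := stepAP H HC (m := 2) le_rfl (by omega)
  have h4 : a 4 = a 1 + a 3 := stepAP H HC (m := 3) (by omega) (by omega)
  have hq3 : 0 < a 3 := H.pos 3 (by omega) (by omega)
  have hL1 : Lm a r 1 = a 1 := by rw [Lm_one, hr1']; simp
  have hn3 : a (2+1) = a 3 := by norm_num
  have hn4 : a (3+1) = a 4 := by norm_num
  have hL2 : Lm a r 2 = Lm a r 1 + (r 2 : ℤ) * a 2 := Lm_succ a r 1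
  have hL3 : Lm a r 3 = Lm a r 2 + (r 3 : ℤ) * a 3 := Lm_succ a r 2
  rcases lt_trichotomy (a 2) (2 * a 1) with hlt | he | hgt
  · -- a 2 < 2 * a 1 : contradiction via the deletion trick at step 4
    exfalso
    have hpair : (a 2 ::ₘ {a 3}) ≤ Am a r 3 :=
      pair_le H (by omega) (by omega) (by omega) (by omega) (by omega) (Or.inl (by omega))
    have hvmem : (Lm a r 3 - (a 2 + a 3)) + a 4 ∈ Sm a r 4 := by
      refine mem_seqSub.mpr ⟨(Am a r 3 - (a 2 ::ₘ {a 3})) + Multiset.replicate 1 (a 4),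
        ?_, ?_, ?_⟩
      · have hA4 : Am a r 4 = Am a r 3 + Multiset.replicate (r 4) (a 4) := Am_succ a r 3
        rw [hA4]
        exact add_le_add (Multiset.sub_le_self _ _)
          ((Multiset.replicate_le_replicate _).mpr (H.rp 4 (by omega) (by omega)))
      · exact ne_zero_of_repl le_rfl ⟨_, rfl⟩
      · rw [Multiset.sum_add, sub_sum hpair, sum_Am, Multiset.sum_replicate,
          Multiset.sum_cons, Multiset.sum_singleton]
        simp
    exact gap_absurd H HC (m := 3) (by omega) (by omega) hvmem (by omega) (by omega)
  · omega
  · -- a 2 > 2 * a 1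
    exfalso
    rcases Nat.lt_or_ge (r 2) 2 with hr2 | hr2
    · -- r 2 = 1 : use a 1 + a 4 ∈ Sm 4
      have hr2' : r 2 = 1 := by have := H.rp 2 (by omega) (by omega); omega
      have hr2a2 : (r 2 : ℤ) * a 2 = a 2 := by rw [hr2']; simp
      have hL2' : Lm a r 2 = a 1 + a 2 := by rw [hL2, hL1, hr2a2]
      have h4' : a 4 = 2 * a 1 + a 2 := by omega
      have hx : a 1 + a 4 ∈ Sm a r 4 :=
        pair_mem_Sm H (by omega) le_rfl (by omega) (by omega) le_rfl (Or.inl (by omega))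
      have hr3Z : (1 : ℤ) ≤ (r 3 : ℤ) := by
        exact_mod_cast H.rp 3 (by omega) (by omega)
      have hr3a : a 3 ≤ (r 3 : ℤ) * a 3 := by nlinarith
      have hxS3 : a 1 + a 4 ∈ Sm a r 3 := by
        rcases mem_struct H HC (m := 3) (by omega) (by omega) hx with h | ⟨t, j, ht1, ht2, hj, heq⟩
        · exact h
        · exfalso
          have hgt3 := NEW_gt H (m := 3) (by omega)
            (mem_NEW.mpr ⟨t, j, ht1, ht2, hj, heq⟩)
          linarith [hgt3, hn4, h4, h3, hr3a, hr2a2, hL3, hL2, hL1, hp, hgt]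
      rcases mem_struct H HC (m := 2) (by omega) (by omega) hxS3 with h | ⟨t, j, ht1, ht2, hj, heq⟩
      · have := (mem_Sm_bounds H (m := 2) (by omega) h).2
        omega
      · norm_num at heq
        have htZ : (1 : ℤ) ≤ (t : ℤ) := by exact_mod_cast ht1
        have haj0 : 0 ≤ a' a j := a'_nonneg H (by omega)
        have haj2 : a' a j ≤ a 2 := by
          interval_cases j <;> simp [a'] <;> omega
        rcases eq_or_lt_of_le htZ with ht | ht
        · rw [← ht] at heq
          interval_cases j <;> simp [a'] at heq <;> omega
        · have ht2' : (2 : ℤ) ≤ (t : ℤ) := by omega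
          have h3pos : (0:ℤ) ≤ a 3 := le_of_lt hq3
          have : (2:ℤ) * a 3 ≤ (t : ℤ) * a 3 := mul_le_mul_of_nonneg_right ht2' h3pos
          omega
    · -- r 2 ≥ 2 : use a 1 + a 3 ∈ Sm 3
      have hx : a 1 + a 3 ∈ Sm a r 3 :=
        pair_mem_Sm H (by omega) le_rfl (by omega) (by omega) le_rfl (Or.inl (by omega))
      have hr2Z : (2 : ℤ) ≤ (r 2 : ℤ) := by exact_mod_cast hr2
      have hr2a : 2 * a 2 ≤ (r 2 : ℤ) * a 2 := mul_le_mul_of_nonneg_right hr2Z (le_of_lt hq)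
      rcases mem_struct H HC (m := 2) (by omega) (by omega) hx with h | ⟨t, j, ht1, ht2, hj, heq⟩
      · obtain ⟨B, hB, hne, hsum⟩ := mem_seqSub.mp h
        obtain ⟨c, hc, hrep⟩ := sum_rep H (m := 2) (by omega) hB
        have hIcc : (Finset.Icc 1 2 : Finset ℕ) = {1, 2} := rfl
        rw [hIcc, Finset.sum_pair (by omega : (1:ℕ) ≠ 2)] at hrep
        have hc1 : c 1 ≤ 1 := by have := hc 1 le_rfl (by omega); omega
        have hc1Z : (c 1 : ℤ) ≤ 1 := by exact_mod_cast hc1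
        have hc1n : (0 : ℤ) ≤ (c 1 : ℤ) := Int.natCast_nonneg _
        have hc2n : (0 : ℤ) ≤ (c 2 : ℤ) := Int.natCast_nonneg _
        have heq2 : a 1 + a 3 = (c 1 : ℤ) * a 1 + (c 2 : ℤ) * a 2 := by
          rw [hsum] at hrep
          exact hrep
        have hc1a : (c 1 : ℤ) * a 1 ≤ a 1 := by nlinarith
        have hc1a' : (0:ℤ) ≤ (c 1 : ℤ) * a 1 := mul_nonneg hc1n (le_of_lt hp)
        rcases Nat.lt_or_ge (c 2) 2 with hc2 | hc2
        · have : c 2 = 0 ∨ c 2 = 1 := by omega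
          rcases this with h0 | h0 <;> rw [h0] at heq2 <;> push_cast at heq2 <;>
            rcases Nat.le_one_iff_eq_zero_or_eq_one.mp hc1 with h1 | h1 <;>
            rw [h1] at heq2 <;> push_cast at heq2 <;> omega
        · have hc2Z : (2:ℤ) ≤ (c 2 : ℤ) := by exact_mod_cast hc2
          have : 2 * a 2 ≤ (c 2 : ℤ) * a 2 := mul_le_mul_of_nonneg_right hc2Z (le_of_lt hq)
          omega
      · have hgt2 := NEW_gt H (m := 2) (by omega)
          (mem_NEW.mpr ⟨t, j, ht1, ht2, hj, heq⟩)
        omega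

end SSI

theorem subsequence_sum_inverse (k : ℕ) (hk : 4 ≤ k) (a : ℕ → ℤ) (r : ℕ → ℕ)
    (ha : ∀ i j, 1 ≤ i → i < j → j ≤ k → a i < a j)
    (hpos : ∀ i, 1 ≤ i → i ≤ k → 0 < a i)
    (hr : ∀ i, 1 ≤ i → i ≤ k → 1 ≤ r i)
    (hcard : (SeqSub (∑ i ∈ Finset.Icc 1 k, Multiset.replicate (r i) (a i))).card =
      ∑ i ∈ Finset.Icc 1 k, i * r i) :
    ∃ d : ℤ, 0 < d ∧ ∀ i, 1 ≤ i → i ≤ k → a i = (i : ℤ) * d := by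
  have H : SSI.Hyp k a r := ⟨ha, hpos, hr⟩
  have HC : (SSI.Sm a r k).card = ∑ i ∈ Finset.Icc 1 k, i * r i := hcard
  have hp : 0 < a 1 := hpos 1 le_rfl (by omega)
  refine ⟨a 1, hp, ?_⟩
  have key : ∀ i, 2 ≤ i → i ≤ k → a i = (i : ℤ) * a 1 := by
    intro i h2
    induction i, h2 using Nat.le_induction with
    | base =>
      intro _
      have h2eq := SSI.a2_eq H HC hk
      push_cast
      linarith
    | succ n hn ih =>
      intro hnk
      have hstep := SSI.stepAP H HC (m := n) hn hnk
      have ihn := ih (by omega)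
      rw [hstep, ihn]
      push_cast
      ring
  intro i hi1 hik
  rcases eq_or_lt_of_le hi1 with h1 | h1
  · rw [← h1]
    push_cast
    ring
  · exact key i (by omega) hik
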